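/- arXiv:2505.20690 — 3 statements merged into one kernel-verified Lean document; each statement's English description precedes it below -/
import Mathlib

section
/- Let T > 0, m ∈ ℕ with m ≥ 1, let (λ_k)_{k∈ℕ} be a sequence of positive real numbers and (α_k)_{k∈ℕ} a sequence of vectors in ℝ^m. If the family of functions (t ↦ α_k·sin(√λ_k t))_{k∈ℕ} is a Riesz sequence in L₂([0,T];ℝ^m) and the family (t ↦ α_k·cos(√λ_k t))_{k∈ℕ} is a Riesz sequence in L₂([0,T];ℝ^m), then the combined family of complex vector exponentials (t ↦ α_k·e^{i√λ_k t})_{k∈ℕ} ∪ (t ↦ α_k·e^{−i√λ_k t})_{k∈ℕ} is a Riesz sequence in L₂([0,2T];ℂ^m). -/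
open MeasureTheory

private lemma expIadd (x y : ℝ) :
    Complex.exp (Complex.I * ((x + y : ℝ) : ℂ)) =
      Complex.exp (Complex.I * (y : ℂ)) *
        ((Real.cos x : ℂ) + Complex.I * (Real.sin x : ℂ)) := by
  push_cast
  rw [mul_add, Complex.exp_add, mul_comm Complex.I (x:ℂ), Complex.exp_mul_I]
  push_cast
  ring

private lemma expNegIadd (x y : ℝ) :
    Complex.exp (-(Complex.I * ((x + y : ℝ) : ℂ))) =
      Complex.exp (-(Complex.I * (y : ℂ))) *
        ((Real.cos x : ℂ) - Complex.I * (Real.sin x : ℂ)) := by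
  push_cast
  rw [mul_add, neg_add, Complex.exp_add, ← neg_mul, mul_comm (-Complex.I) (x:ℂ),
    show (x:ℂ) * -Complex.I = ((-x : ℝ) : ℂ) * Complex.I by push_cast; ring,
    Complex.exp_mul_I]
  push_cast [Complex.cos_neg, Complex.sin_neg]
  ring

private lemma piLp_sum_apply {ι κ : Type*} (𝕜 : Type*) [NormedField 𝕜] {p : ENNReal}
    (u : Finset ι) (f : ι → PiLp p (fun _ : κ => 𝕜)) (j : κ) :
    (∑ k ∈ u, f k) j = ∑ k ∈ u, f k j := by
  classical
  induction u using Finset.cons_induction with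
  | empty => rfl
  | cons a s ha ih => rw [Finset.sum_cons, Finset.sum_cons, PiLp.add_apply, ih]

private lemma euclid_norm_sq_split {m : ℕ} (v : EuclideanSpace ℂ (Fin m))
    (x y : EuclideanSpace ℝ (Fin m)) (hx : ∀ j, x j = (v j).re) (hy : ∀ j, y j = (v j).im) :
    ‖v‖ ^ 2 = ‖x‖ ^ 2 + ‖y‖ ^ 2 := by
  simp only [EuclideanSpace.norm_eq]
  rw [Real.sq_sqrt (by positivity), Real.sq_sqrt (by positivity),
    Real.sq_sqrt (by positivity), ← Finset.sum_add_distrib]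
  refine Finset.sum_congr rfl fun j _ => ?_
  rw [hx, hy]
  simp only [Complex.sq_norm, Complex.normSq_apply, Real.norm_eq_abs,
    sq_abs]
  ring

private lemma cplx_para (x y : ℂ) : ‖x + y‖ ^ 2 + ‖x - y‖ ^ 2 = 2 * (‖x‖ ^ 2 + ‖y‖ ^ 2) := by
  have := parallelogram_law_with_norm ℂ x y
  nlinarith [this]

private lemma eucl_para {m : ℕ} (x y : EuclideanSpace ℂ (Fin m)) :
    ‖x + y‖ ^ 2 + ‖x - y‖ ^ 2 = 2 * (‖x‖ ^ 2 + ‖y‖ ^ 2) := by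
  have := parallelogram_law_with_norm ℂ x y
  nlinarith [this]

/-- The family `ξ` of `𝕜^m`-valued functions is a Riesz sequence in `L₂([T',T''];𝕜^m)`:
there are constants `0 < c ≤ C` such that
`c·Σ ‖a k‖² ≤ ∫_{T'}^{T''} ‖Σ a k • ξ k t‖² dt ≤ C·Σ ‖a k‖²`
for every finitely supported family of scalars `a`. -/
def IsRieszFamilyOn (𝕜 : Type) [RCLike 𝕜] {ι : Type} {m : ℕ} (T' T'' : ℝ)
    (ξ : ι → ℝ → EuclideanSpace 𝕜 (Fin m)) : Prop :=
  ∃ c C : ℝ, 0 < c ∧ c ≤ C ∧ ∀ (s : Finset ι) (a : ι → 𝕜),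
    c * ∑ k ∈ s, ‖a k‖ ^ 2 ≤ (∫ t in Set.Icc T' T'', ‖∑ k ∈ s, a k • ξ k t‖ ^ 2) ∧
    (∫ t in Set.Icc T' T'', ‖∑ k ∈ s, a k • ξ k t‖ ^ 2) ≤ C * ∑ k ∈ s, ‖a k‖ ^ 2

set_option maxHeartbeats 1000000 in
/-- If the families `(t ↦ sin(√λ_k t) α_k)` and `(t ↦ cos(√λ_k t) α_k)` are Riesz
sequences in `L₂([0,T];ℝ^m)`, then the combined family of complex vector exponentials
`(t ↦ e^{i√λ_k t} α_k) ∪ (t ↦ e^{-i√λ_k t} α_k)` is a Riesz sequence in `L₂([0,2T];ℂ^m)`. -/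
theorem exponentials_isRieszFamilyOn_of_sin_cos
    (T : ℝ) (hT : 0 < T) (m : ℕ) (hm : 1 ≤ m)
    (lam : ℕ → ℝ) (hlam : ∀ k, 0 < lam k)
    (α : ℕ → EuclideanSpace ℝ (Fin m))
    (hsin : IsRieszFamilyOn ℝ 0 T
      (fun k => fun t => Real.sin (Real.sqrt (lam k) * t) • α k))
    (hcos : IsRieszFamilyOn ℝ 0 T
      (fun k => fun t => Real.cos (Real.sqrt (lam k) * t) • α k)) :
    IsRieszFamilyOn ℂ 0 (2 * T)
      (Sum.elim
        (fun k => fun t => Complex.exp (Complex.I * (Real.sqrt (lam k) * t : ℝ)) •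
          (WithLp.toLp 2 (fun j => ((α k j : ℝ) : ℂ)) : EuclideanSpace ℂ (Fin m)))
        (fun k => fun t => Complex.exp (-(Complex.I * (Real.sqrt (lam k) * t : ℝ))) •
          (WithLp.toLp 2 (fun j => ((α k j : ℝ) : ℂ)) : EuclideanSpace ℂ (Fin m)))) := by
  classical
  obtain ⟨cS, CS, hcS, hcSC, hS⟩ := hsin
  obtain ⟨cC, CC, hcC, hcCC, hC⟩ := hcos
  refine ⟨4 * min cS cC, 4 * max CS CC, by positivity,
    by nlinarith [min_le_left cS cC, le_max_left CS CC], ?_⟩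
  intro s a
  set Φ : (ℕ ⊕ ℕ) → ℝ → EuclideanSpace ℂ (Fin m) := Sum.elim
        (fun k => fun t => Complex.exp (Complex.I * (Real.sqrt (lam k) * t : ℝ)) •
          (WithLp.toLp 2 (fun j => ((α k j : ℝ) : ℂ)) : EuclideanSpace ℂ (Fin m)))
        (fun k => fun t => Complex.exp (-(Complex.I * (Real.sqrt (lam k) * t : ℝ))) •
          (WithLp.toLp 2 (fun j => ((α k j : ℝ) : ℂ)) : EuclideanSpace ℂ (Fin m))) with hΦdef
  set μ : ℕ → ℝ := fun k => Real.sqrt (lam k) with hμdef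
  set αC : ℕ → EuclideanSpace ℂ (Fin m) := fun k => WithLp.toLp 2 (fun j => ((α k j : ℝ) : ℂ)) with hαCdef
  have hΦl : ∀ k (t : ℝ), Φ (Sum.inl k) t
      = Complex.exp (Complex.I * ((μ k * t : ℝ) : ℂ)) • αC k := fun k t => rfl
  have hΦr : ∀ k (t : ℝ), Φ (Sum.inr k) t
      = Complex.exp (-(Complex.I * ((μ k * t : ℝ) : ℂ))) • αC k := fun k t => rfl
  set a' : ℕ → ℂ := fun k => a (Sum.inl k) * Complex.exp (Complex.I * ((μ k * T : ℝ) : ℂ))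
    with ha'def
  set b' : ℕ → ℂ := fun k => a (Sum.inr k) * Complex.exp (-(Complex.I * ((μ k * T : ℝ) : ℂ)))
    with hb'def
  set u : Finset ℕ := s.toLeft ∪ s.toRight with hudef
  set c : ℕ → ℂ := fun k => (if k ∈ s.toLeft then a' k else 0) +
    (if k ∈ s.toRight then b' k else 0) with hcdef
  set d : ℕ → ℂ := fun k => (if k ∈ s.toLeft then a' k else 0) -
    (if k ∈ s.toRight then b' k else 0) with hddef
  set X : ℝ → EuclideanSpace ℂ (Fin m) :=
    fun t => ∑ k ∈ u, (c k * (Real.cos (μ k * t) : ℝ)) • αC k with hXdef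
  set Y : ℝ → EuclideanSpace ℂ (Fin m) :=
    fun t => ∑ k ∈ u, (d k * (Real.sin (μ k * t) : ℝ)) • αC k with hYdef
  -- reduction of sums over `s` to sums over `u`
  have husub₁ : s.toLeft ⊆ u := hudef ▸ Finset.subset_union_left
  have husub₂ : s.toRight ⊆ u := hudef ▸ Finset.subset_union_right
  have hsum_u : ∀ (f : ℕ ⊕ ℕ → EuclideanSpace ℂ (Fin m)),
      ∑ x ∈ s, f x = (∑ k ∈ u, if k ∈ s.toLeft then f (Sum.inl k) else 0)
        + ∑ k ∈ u, if k ∈ s.toRight then f (Sum.inr k) else 0 := by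
    intro f
    rw [Finset.sum_ite_mem, Finset.sum_ite_mem,
      Finset.inter_eq_right.mpr husub₁, Finset.inter_eq_right.mpr husub₂]
    conv_lhs => rw [← Finset.toLeft_disjSum_toRight (u := s)]
    rw [Finset.sum_disjSum]
  -- the two key pointwise identities
  have key1 : ∀ t : ℝ, ∑ x ∈ s, a x • Φ x (t + T) = X t + Complex.I • Y t := by
    intro t
    rw [hsum_u (fun x => a x • Φ x (t + T)), hXdef, hYdef, Finset.smul_sum,
      ← Finset.sum_add_distrib, ← Finset.sum_add_distrib]
    refine Finset.sum_congr rfl fun k hk => ?_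
    rw [hΦl, hΦr, hcdef, hddef,
      show μ k * (t + T) = μ k * t + μ k * T from mul_add _ _ _,
      expIadd (μ k * t) (μ k * T), expNegIadd (μ k * t) (μ k * T), ha'def, hb'def]
    beta_reduce
    split_ifs <;> module
  have key2 : ∀ t : ℝ, ∑ x ∈ s, a x • Φ x (-t + T) = X t - Complex.I • Y t := by
    intro t
    rw [hsum_u (fun x => a x • Φ x (-t + T)), hXdef, hYdef, Finset.smul_sum,
      ← Finset.sum_sub_distrib, ← Finset.sum_add_distrib]
    refine Finset.sum_congr rfl fun k hk => ?_
    rw [hΦl, hΦr, hcdef, hddef,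
      show μ k * (-t + T) = -(μ k * t) + μ k * T from by ring,
      expIadd (-(μ k * t)) (μ k * T), expNegIadd (-(μ k * t)) (μ k * T), ha'def, hb'def]
    rw [Real.cos_neg, Real.sin_neg]
    push_cast
    beta_reduce
    split_ifs <;> module
  -- norm splittings
  have hXsplit : ∀ t : ℝ, ‖X t‖ ^ 2
      = ‖∑ k ∈ u, (c k).re • (Real.cos (μ k * t) • α k)‖ ^ 2
        + ‖∑ k ∈ u, (c k).im • (Real.cos (μ k * t) • α k)‖ ^ 2 := by
    intro t
    refine euclid_norm_sq_split (X t) _ _ ?_ ?_ <;> intro j <;>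
      rw [piLp_sum_apply ℝ, hXdef] <;>
      simp only [piLp_sum_apply ℂ, Complex.re_sum, Complex.im_sum] <;>
      refine Finset.sum_congr rfl fun k _ => ?_ <;>
      simp only [PiLp.smul_apply, smul_eq_mul, hαCdef, PiLp.toLp_apply, Complex.mul_re, Complex.mul_im,
        Complex.ofReal_re, Complex.ofReal_im, mul_zero, zero_mul, sub_zero, add_zero] <;>
      ring
  have hYsplit : ∀ t : ℝ, ‖Y t‖ ^ 2
      = ‖∑ k ∈ u, (d k).re • (Real.sin (μ k * t) • α k)‖ ^ 2
        + ‖∑ k ∈ u, (d k).im • (Real.sin (μ k * t) • α k)‖ ^ 2 := by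
    intro t
    refine euclid_norm_sq_split (Y t) _ _ ?_ ?_ <;> intro j <;>
      rw [piLp_sum_apply ℝ, hYdef] <;>
      simp only [piLp_sum_apply ℂ, Complex.re_sum, Complex.im_sum] <;>
      refine Finset.sum_congr rfl fun k _ => ?_ <;>
      simp only [PiLp.smul_apply, smul_eq_mul, hαCdef, PiLp.toLp_apply, Complex.mul_re, Complex.mul_im,
        Complex.ofReal_re, Complex.ofReal_im, mul_zero, zero_mul, sub_zero, add_zero] <;>
      ring
  set g : ℝ → ℝ := fun t => ‖∑ x ∈ s, a x • Φ x t‖ ^ 2 with hgdef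
  -- pointwise identity for the two reflected integrands
  have hpt : ∀ t : ℝ, g (-t + T) + g (t + T)
      = 2 * (‖∑ k ∈ u, (c k).re • (Real.cos (μ k * t) • α k)‖ ^ 2
            + ‖∑ k ∈ u, (c k).im • (Real.cos (μ k * t) • α k)‖ ^ 2)
        + 2 * (‖∑ k ∈ u, (d k).re • (Real.sin (μ k * t) • α k)‖ ^ 2
            + ‖∑ k ∈ u, (d k).im • (Real.sin (μ k * t) • α k)‖ ^ 2) := by
    intro t
    simp only [hgdef]
    rw [key2 t, key1 t, add_comm]
    rw [eucl_para (X t) (Complex.I • Y t), norm_smul, Complex.norm_I, one_mul,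
      hXsplit t, hYsplit t]
    ring
  -- continuity
  have hgcont : Continuous g := by
    rw [hgdef]
    refine Continuous.pow (Continuous.norm (continuous_finset_sum _ fun x _ => ?_)) 2
    refine Continuous.const_smul ?_ (a x)
    rcases x with k | k
    · exact Continuous.congr ((Complex.continuous_exp.comp ((continuous_const.mul
        (Complex.continuous_ofReal.comp (continuous_const.mul continuous_id))))).smul
        continuous_const) (fun t => (hΦl k t).symm)
    · exact Continuous.congr ((Complex.continuous_exp.comp (((continuous_const.mul
        (Complex.continuous_ofReal.comp (continuous_const.mul continuous_id)))).neg)).smul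
        continuous_const) (fun t => (hΦr k t).symm)
  have hRcont : ∀ (q : ℕ → ℝ) (tr : ℕ → ℝ → ℝ), (∀ k, Continuous (tr k)) →
      Continuous (fun t => ‖∑ k ∈ u, q k • (tr k t • α k)‖ ^ 2) := by
    intro q tr htr
    exact Continuous.pow (Continuous.norm (continuous_finset_sum _ fun k _ =>
      (Continuous.smul (htr k) continuous_const).const_smul (q k))) 2
  have hcoscont : ∀ k : ℕ, Continuous fun t : ℝ => Real.cos (μ k * t) :=
    fun k => Real.continuous_cos.comp (continuous_const.mul continuous_id)
  have hsincont : ∀ k : ℕ, Continuous fun t : ℝ => Real.sin (μ k * t) :=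
    fun k => Real.continuous_sin.comp (continuous_const.mul continuous_id)
  have hf1c := hRcont (fun k => (c k).re) (fun k t => Real.cos (μ k * t)) hcoscont
  have hf2c := hRcont (fun k => (c k).im) (fun k t => Real.cos (μ k * t)) hcoscont
  have hf3c := hRcont (fun k => (d k).re) (fun k t => Real.sin (μ k * t)) hsincont
  have hf4c := hRcont (fun k => (d k).im) (fun k t => Real.sin (μ k * t)) hsincont
  have hshift : Continuous fun t => g (t + T) :=
    hgcont.comp (continuous_id.add continuous_const)
  have hneg : Continuous fun t => g (-t + T) :=
    hgcont.comp (continuous_id.neg.add continuous_const)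
  have hJ : (∫ t in Set.Icc (0:ℝ) (2*T), g t)
      = 2 * ((∫ t in Set.Icc (0:ℝ) T, ‖∑ k ∈ u, (c k).re • (Real.cos (μ k * t) • α k)‖ ^ 2)
           + (∫ t in Set.Icc (0:ℝ) T, ‖∑ k ∈ u, (c k).im • (Real.cos (μ k * t) • α k)‖ ^ 2))
        + 2 * ((∫ t in Set.Icc (0:ℝ) T, ‖∑ k ∈ u, (d k).re • (Real.sin (μ k * t) • α k)‖ ^ 2)
             + (∫ t in Set.Icc (0:ℝ) T, ‖∑ k ∈ u, (d k).im • (Real.sin (μ k * t) • α k)‖ ^ 2)) := by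
    calc (∫ t in Set.Icc (0:ℝ) (2*T), g t)
        = ∫ t in (0:ℝ)..(2*T), g t := by
          rw [MeasureTheory.integral_Icc_eq_integral_Ioc,
            intervalIntegral.integral_of_le (by linarith)]
      _ = ∫ t in (-T)..T, g (t + T) := by
          have h := intervalIntegral.integral_comp_add_right (a := -T) (b := T) (f := g) T
          rw [show -T + T = (0:ℝ) by ring, show T + T = 2*T by ring] at h
          exact h.symm
      _ = (∫ t in (-T)..(0:ℝ), g (t + T)) + ∫ t in (0:ℝ)..T, g (t + T) :=
          (intervalIntegral.integral_add_adjacent_intervals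
            (hshift.intervalIntegrable _ _) (hshift.intervalIntegrable _ _)).symm
      _ = (∫ t in (0:ℝ)..T, g (-t + T)) + ∫ t in (0:ℝ)..T, g (t + T) := by
          have h := intervalIntegral.integral_comp_neg (a := (0:ℝ)) (b := T)
            (f := fun t => g (t + T))
          rw [neg_zero] at h
          rw [← h]
      _ = ∫ t in (0:ℝ)..T, (g (-t + T) + g (t + T)) :=
          (intervalIntegral.integral_add (hneg.intervalIntegrable _ _)
            (hshift.intervalIntegrable _ _)).symm
      _ = ∫ t in (0:ℝ)..T,
            (2 * (‖∑ k ∈ u, (c k).re • (Real.cos (μ k * t) • α k)‖ ^ 2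
                + ‖∑ k ∈ u, (c k).im • (Real.cos (μ k * t) • α k)‖ ^ 2)
           + 2 * (‖∑ k ∈ u, (d k).re • (Real.sin (μ k * t) • α k)‖ ^ 2
                + ‖∑ k ∈ u, (d k).im • (Real.sin (μ k * t) • α k)‖ ^ 2)) := by
          simp only [hpt]
      _ = 2 * ((∫ t in (0:ℝ)..T, ‖∑ k ∈ u, (c k).re • (Real.cos (μ k * t) • α k)‖ ^ 2)
             + (∫ t in (0:ℝ)..T, ‖∑ k ∈ u, (c k).im • (Real.cos (μ k * t) • α k)‖ ^ 2))
          + 2 * ((∫ t in (0:ℝ)..T, ‖∑ k ∈ u, (d k).re • (Real.sin (μ k * t) • α k)‖ ^ 2)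
               + (∫ t in (0:ℝ)..T, ‖∑ k ∈ u, (d k).im • (Real.sin (μ k * t) • α k)‖ ^ 2)) := by
          rw [intervalIntegral.integral_add ((continuous_const.fun_mul (hf1c.fun_add hf2c)).intervalIntegrable _ _)
              ((continuous_const.fun_mul (hf3c.fun_add hf4c)).intervalIntegrable _ _),
            intervalIntegral.integral_const_mul, intervalIntegral.integral_const_mul,
            intervalIntegral.integral_add (hf1c.intervalIntegrable _ _)
              (hf2c.intervalIntegrable _ _),
            intervalIntegral.integral_add (hf3c.intervalIntegrable _ _)
              (hf4c.intervalIntegrable _ _)]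
      _ = 2 * ((∫ t in Set.Icc (0:ℝ) T, ‖∑ k ∈ u, (c k).re • (Real.cos (μ k * t) • α k)‖ ^ 2)
             + (∫ t in Set.Icc (0:ℝ) T, ‖∑ k ∈ u, (c k).im • (Real.cos (μ k * t) • α k)‖ ^ 2))
          + 2 * ((∫ t in Set.Icc (0:ℝ) T, ‖∑ k ∈ u, (d k).re • (Real.sin (μ k * t) • α k)‖ ^ 2)
               + (∫ t in Set.Icc (0:ℝ) T, ‖∑ k ∈ u, (d k).im • (Real.sin (μ k * t) • α k)‖ ^ 2)) := by
          simp only [intervalIntegral.integral_of_le hT.le,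
            ← MeasureTheory.integral_Icc_eq_integral_Ioc]
  -- bounds from the hypotheses
  have hb1 : cC * (∑ k ∈ u, ‖(c k).re‖ ^ 2)
        ≤ (∫ t in Set.Icc (0:ℝ) T, ‖∑ k ∈ u, (c k).re • (Real.cos (μ k * t) • α k)‖ ^ 2)
      ∧ (∫ t in Set.Icc (0:ℝ) T, ‖∑ k ∈ u, (c k).re • (Real.cos (μ k * t) • α k)‖ ^ 2)
        ≤ CC * (∑ k ∈ u, ‖(c k).re‖ ^ 2) := by
    simpa [hμdef] using hC u (fun k => (c k).re)
  have hb2 : cC * (∑ k ∈ u, ‖(c k).im‖ ^ 2)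
        ≤ (∫ t in Set.Icc (0:ℝ) T, ‖∑ k ∈ u, (c k).im • (Real.cos (μ k * t) • α k)‖ ^ 2)
      ∧ (∫ t in Set.Icc (0:ℝ) T, ‖∑ k ∈ u, (c k).im • (Real.cos (μ k * t) • α k)‖ ^ 2)
        ≤ CC * (∑ k ∈ u, ‖(c k).im‖ ^ 2) := by
    simpa [hμdef] using hC u (fun k => (c k).im)
  have hb3 : cS * (∑ k ∈ u, ‖(d k).re‖ ^ 2)
        ≤ (∫ t in Set.Icc (0:ℝ) T, ‖∑ k ∈ u, (d k).re • (Real.sin (μ k * t) • α k)‖ ^ 2)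
      ∧ (∫ t in Set.Icc (0:ℝ) T, ‖∑ k ∈ u, (d k).re • (Real.sin (μ k * t) • α k)‖ ^ 2)
        ≤ CS * (∑ k ∈ u, ‖(d k).re‖ ^ 2) := by
    simpa [hμdef] using hS u (fun k => (d k).re)
  have hb4 : cS * (∑ k ∈ u, ‖(d k).im‖ ^ 2)
        ≤ (∫ t in Set.Icc (0:ℝ) T, ‖∑ k ∈ u, (d k).im • (Real.sin (μ k * t) • α k)‖ ^ 2)
      ∧ (∫ t in Set.Icc (0:ℝ) T, ‖∑ k ∈ u, (d k).im • (Real.sin (μ k * t) • α k)‖ ^ 2)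
        ≤ CS * (∑ k ∈ u, ‖(d k).im‖ ^ 2) := by
    simpa [hμdef] using hS u (fun k => (d k).im)
  -- the coefficient sum identity
  have hnormexp1 : ∀ k, ‖a' k‖ = ‖a (Sum.inl k)‖ := by
    intro k
    rw [ha'def]
    simp [Complex.norm_exp]
  have hnormexp2 : ∀ k, ‖b' k‖ = ‖a (Sum.inr k)‖ := by
    intro k
    rw [hb'def]
    simp [Complex.norm_exp]
  have hsum2 : (∑ k ∈ u, ‖(c k).re‖ ^ 2) + (∑ k ∈ u, ‖(c k).im‖ ^ 2)
      + ((∑ k ∈ u, ‖(d k).re‖ ^ 2) + (∑ k ∈ u, ‖(d k).im‖ ^ 2))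
      = 2 * ∑ x ∈ s, ‖a x‖ ^ 2 := by
    rw [← Finset.sum_add_distrib, ← Finset.sum_add_distrib, ← Finset.sum_add_distrib]
    have hk : ∀ k ∈ u, ‖(c k).re‖ ^ 2 + ‖(c k).im‖ ^ 2 + (‖(d k).re‖ ^ 2 + ‖(d k).im‖ ^ 2)
        = 2 * ((if k ∈ s.toLeft then ‖a (Sum.inl k)‖ ^ 2 else 0)
             + (if k ∈ s.toRight then ‖a (Sum.inr k)‖ ^ 2 else 0)) := by
      intro k _
      have h1 : ‖(c k).re‖ ^ 2 + ‖(c k).im‖ ^ 2 = ‖c k‖ ^ 2 := by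
        simp only [Real.norm_eq_abs, sq_abs, Complex.sq_norm,
          Complex.normSq_apply]
        ring
      have h2 : ‖(d k).re‖ ^ 2 + ‖(d k).im‖ ^ 2 = ‖d k‖ ^ 2 := by
        simp only [Real.norm_eq_abs, sq_abs, Complex.sq_norm,
          Complex.normSq_apply]
        ring
      have h3 : ‖c k‖ ^ 2 + ‖d k‖ ^ 2
          = 2 * (‖if k ∈ s.toLeft then a' k else 0‖ ^ 2
               + ‖if k ∈ s.toRight then b' k else 0‖ ^ 2) := by
        rw [hcdef, hddef]
        exact cplx_para _ _
      rw [h1, h2, h3]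
      congr 1
      rw [apply_ite (fun z : ℂ => ‖z‖ ^ 2), apply_ite (fun z : ℂ => ‖z‖ ^ 2)]
      simp only [norm_zero, hnormexp1 k, hnormexp2 k]
      norm_num
    rw [Finset.sum_congr rfl hk, ← Finset.mul_sum, Finset.sum_add_distrib,
      Finset.sum_ite_mem, Finset.sum_ite_mem,
      Finset.inter_eq_right.mpr husub₁, Finset.inter_eq_right.mpr husub₂]
    congr 1
    conv_rhs => rw [← Finset.toLeft_disjSum_toRight (u := s)]
    rw [Finset.sum_disjSum]
  -- put everything together
  obtain ⟨h1l, h1u⟩ := hb1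
  obtain ⟨h2l, h2u⟩ := hb2
  obtain ⟨h3l, h3u⟩ := hb3
  obtain ⟨h4l, h4u⟩ := hb4
  have hS1nn : (0:ℝ) ≤ ∑ k ∈ u, ‖(c k).re‖ ^ 2 := Finset.sum_nonneg fun k _ => by positivity
  have hS2nn : (0:ℝ) ≤ ∑ k ∈ u, ‖(c k).im‖ ^ 2 := Finset.sum_nonneg fun k _ => by positivity
  have hS3nn : (0:ℝ) ≤ ∑ k ∈ u, ‖(d k).re‖ ^ 2 := Finset.sum_nonneg fun k _ => by positivity
  have hS4nn : (0:ℝ) ≤ ∑ k ∈ u, ‖(d k).im‖ ^ 2 := Finset.sum_nonneg fun k _ => by positivity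
  have hm1 := mul_le_mul_of_nonneg_right (min_le_right cS cC) hS1nn
  have hm2 := mul_le_mul_of_nonneg_right (min_le_right cS cC) hS2nn
  have hm3 := mul_le_mul_of_nonneg_right (min_le_left cS cC) hS3nn
  have hm4 := mul_le_mul_of_nonneg_right (min_le_left cS cC) hS4nn
  have hM1 := mul_le_mul_of_nonneg_right (le_max_right CS CC) hS1nn
  have hM2 := mul_le_mul_of_nonneg_right (le_max_right CS CC) hS2nn
  have hM3 := mul_le_mul_of_nonneg_right (le_max_left CS CC) hS3nn
  have hM4 := mul_le_mul_of_nonneg_right (le_max_left CS CC) hS4nn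
  have e1 : (min cS cC) * ((∑ k ∈ u, ‖(c k).re‖ ^ 2) + (∑ k ∈ u, ‖(c k).im‖ ^ 2)
      + ((∑ k ∈ u, ‖(d k).re‖ ^ 2) + (∑ k ∈ u, ‖(d k).im‖ ^ 2)))
      = (min cS cC) * (2 * ∑ x ∈ s, ‖a x‖ ^ 2) := by rw [hsum2]
  have e2 : (max CS CC) * ((∑ k ∈ u, ‖(c k).re‖ ^ 2) + (∑ k ∈ u, ‖(c k).im‖ ^ 2)
      + ((∑ k ∈ u, ‖(d k).re‖ ^ 2) + (∑ k ∈ u, ‖(d k).im‖ ^ 2)))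
      = (max CS CC) * (2 * ∑ x ∈ s, ‖a x‖ ^ 2) := by rw [hsum2]
  constructor
  · rw [hJ]
    linarith [h1l, h2l, h3l, h4l, hm1, hm2, hm3, hm4, e1]
  · rw [hJ]
    linarith [h1u, h2u, h3u, h4u, hM1, hM2, hM3, hM4, e2]
end

section
/- Let T > 0, m ∈ ℕ with m ≥ 1, let (λ_k)_{k∈ℕ} be a sequence of positive real numbers and (α_k)_{k∈ℕ} a sequence of vectors in ℝ^m. If the family (t ↦ α_k·sin(√λ_k t))_{k∈ℕ} is a Riesz sequence in L₂([0,T];ℝ^m) and the family (t ↦ α_k·cos(√λ_k t))_{k∈ℕ} is a Riesz sequence in L₂([0,T];ℝ^m), then the union family (t ↦ α_k·sin(√λ_k t))_{k∈ℕ} ∪ (t ↦ α_k·cos(√λ_k t))_{k∈ℕ} is a Riesz sequence in L₂([−T,T];ℝ^m). -/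
open MeasureTheory

/-- Splitting a symmetric-interval integral of a continuous function. -/
lemma integral_Icc_symm_aux (T : ℝ) (hT : 0 ≤ T) (g : ℝ → ℝ) (hg : Continuous g) :
    ∫ t in Set.Icc (-T) T, g t = ∫ t in Set.Icc 0 T, (g t + g (-t)) := by
  have hInt : ∀ a b : ℝ, IntervalIntegrable g volume a b :=
    fun a b => hg.intervalIntegrable a b
  have h1 : ∫ t in Set.Icc (-T) T, g t = ∫ t in (-T)..T, g t := by
    rw [intervalIntegral.integral_of_le (by linarith), integral_Icc_eq_integral_Ioc]
  have h2 : ∫ t in Set.Icc 0 T, (g t + g (-t)) = ∫ t in (0:ℝ)..T, (g t + g (-t)) := by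
    rw [intervalIntegral.integral_of_le hT, integral_Icc_eq_integral_Ioc]
  rw [h1, h2]
  have hadd : ∫ t in (-T)..T, g t = (∫ t in (-T)..(0:ℝ), g t) + ∫ t in (0:ℝ)..T, g t :=
    (intervalIntegral.integral_add_adjacent_intervals (hInt _ _) (hInt _ _)).symm
  have hneg : ∫ t in (0:ℝ)..T, g (-t) = ∫ t in (-T)..(0:ℝ), g t := by
    have := intervalIntegral.integral_comp_neg (a := 0) (b := T) (f := g)
    simpa using this
  have hsplit2 : (∫ t in (0:ℝ)..T, (g t + g (-t)))
      = (∫ t in (0:ℝ)..T, g t) + ∫ t in (0:ℝ)..T, g (-t) :=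
    intervalIntegral.integral_add (hInt _ _)
      ((hg.comp continuous_neg).intervalIntegrable _ _)
  rw [hadd, hsplit2, hneg]
  ring

/-- If the families `(t ↦ sin(√λ_k t) α_k)` and `(t ↦ cos(√λ_k t) α_k)` are Riesz
sequences in `L₂([0,T];ℝ^m)`, then their union is a Riesz sequence in `L₂([-T,T];ℝ^m)`. -/
theorem sin_cos_union_isRieszFamilyOn
    (T : ℝ) (hT : 0 < T) (m : ℕ) (hm : 1 ≤ m)
    (lam : ℕ → ℝ) (hlam : ∀ k, 0 < lam k)
    (α : ℕ → EuclideanSpace ℝ (Fin m))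
    (hsin : IsRieszFamilyOn ℝ 0 T
      (fun k => fun t => Real.sin (Real.sqrt (lam k) * t) • α k))
    (hcos : IsRieszFamilyOn ℝ 0 T
      (fun k => fun t => Real.cos (Real.sqrt (lam k) * t) • α k)) :
    IsRieszFamilyOn ℝ (-T) T
      (Sum.elim
        (fun k => fun t => Real.sin (Real.sqrt (lam k) * t) • α k)
        (fun k => fun t => Real.cos (Real.sqrt (lam k) * t) • α k)) := by
  obtain ⟨c₁, C₁, hc₁, hcC₁, h₁⟩ := hsin
  obtain ⟨c₂, C₂, hc₂, hcC₂, h₂⟩ := hcos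
  refine ⟨2 * min c₁ c₂, 2 * max C₁ C₂, by positivity, ?_, ?_⟩
  · have : min c₁ c₂ ≤ max C₁ C₂ := le_trans (min_le_left _ _) (le_trans hcC₁ (le_max_left _ _))
    linarith
  intro s a
  set S : ℝ → EuclideanSpace ℝ (Fin m) :=
    fun t => ∑ k ∈ s.toLeft, a (Sum.inl k) • (Real.sin (Real.sqrt (lam k) * t) • α k) with hS
  set Cf : ℝ → EuclideanSpace ℝ (Fin m) :=
    fun t => ∑ k ∈ s.toRight, a (Sum.inr k) • (Real.cos (Real.sqrt (lam k) * t) • α k) with hCf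
  have hsplit : ∀ (f : ℕ ⊕ ℕ → ℝ), ∑ k ∈ s, f k
      = (∑ k ∈ s.toLeft, f (Sum.inl k)) + ∑ k ∈ s.toRight, f (Sum.inr k) := by
    intro f
    rw [← Finset.sum_disjSum, Finset.toLeft_disjSum_toRight]
  have hsplitV : ∀ (f : ℕ ⊕ ℕ → EuclideanSpace ℝ (Fin m)), ∑ k ∈ s, f k
      = (∑ k ∈ s.toLeft, f (Sum.inl k)) + ∑ k ∈ s.toRight, f (Sum.inr k) := by
    intro f
    rw [← Finset.sum_disjSum, Finset.toLeft_disjSum_toRight]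
  have hsum : ∀ t : ℝ, (∑ k ∈ s, a k • (Sum.elim
        (fun k => fun t => Real.sin (Real.sqrt (lam k) * t) • α k)
        (fun k => fun t => Real.cos (Real.sqrt (lam k) * t) • α k)) k t)
      = S t + Cf t := by
    intro t
    rw [hsplitV]
    rfl
  -- continuity
  have hScont : Continuous S := by
    apply continuous_finset_sum
    intro k _
    fun_prop
  have hCcont : Continuous Cf := by
    apply continuous_finset_sum
    intro k _
    fun_prop
  -- parity
  have hSneg : ∀ t, S (-t) = -S t := by
    intro t
    simp only [hS, mul_neg, Real.sin_neg, neg_smul, smul_neg, Finset.sum_neg_distrib]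
  have hCneg : ∀ t, Cf (-t) = Cf t := by
    intro t
    simp only [hCf, mul_neg, Real.cos_neg]
  -- the key integral identity
  have hkey : (∫ t in Set.Icc (-T) T, ‖S t + Cf t‖ ^ 2)
      = 2 * (∫ t in Set.Icc 0 T, ‖S t‖ ^ 2) + 2 * (∫ t in Set.Icc 0 T, ‖Cf t‖ ^ 2) := by
    have hg : Continuous fun t => ‖S t + Cf t‖ ^ 2 := by fun_prop
    rw [integral_Icc_symm_aux T hT.le _ hg]
    have hptw : ∀ t : ℝ, ‖S t + Cf t‖ ^ 2 + ‖S (-t) + Cf (-t)‖ ^ 2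
        = 2 * ‖S t‖ ^ 2 + 2 * ‖Cf t‖ ^ 2 := by
      intro t
      rw [hSneg, hCneg]
      have := parallelogram_law_with_norm ℝ (Cf t) (S t)
      have h2 : -S t + Cf t = Cf t - S t := by abel
      rw [h2]
      rw [add_comm (S t) (Cf t)]
      nlinarith [this]
    calc (∫ t in Set.Icc 0 T, (‖S t + Cf t‖ ^ 2 + ‖S (-t) + Cf (-t)‖ ^ 2))
        = ∫ t in Set.Icc 0 T, (2 * ‖S t‖ ^ 2 + 2 * ‖Cf t‖ ^ 2) := by
          exact setIntegral_congr_fun measurableSet_Icc (fun t _ => hptw t)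
      _ = 2 * (∫ t in Set.Icc 0 T, ‖S t‖ ^ 2) + 2 * (∫ t in Set.Icc 0 T, ‖Cf t‖ ^ 2) := by
          rw [integral_add, integral_const_mul, integral_const_mul]
          · exact ((Continuous.mul continuous_const (by fun_prop)).integrableOn_Icc)
          · exact ((Continuous.mul continuous_const (by fun_prop)).integrableOn_Icc)
  -- apply the hypotheses
  have hL := h₁ s.toLeft (fun k => a (Sum.inl k))
  have hR := h₂ s.toRight (fun k => a (Sum.inr k))
  have hLnn : (0:ℝ) ≤ ∑ k ∈ s.toLeft, ‖a (Sum.inl k)‖ ^ 2 :=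
    Finset.sum_nonneg fun k _ => by positivity
  have hRnn : (0:ℝ) ≤ ∑ k ∈ s.toRight, ‖a (Sum.inr k)‖ ^ 2 :=
    Finset.sum_nonneg fun k _ => by positivity
  have hnormsplit : ∑ k ∈ s, ‖a k‖ ^ 2
      = (∑ k ∈ s.toLeft, ‖a (Sum.inl k)‖ ^ 2) + ∑ k ∈ s.toRight, ‖a (Sum.inr k)‖ ^ 2 :=
    hsplit _
  have hIeq : (∫ t in Set.Icc (-T) T, ‖∑ k ∈ s, a k • (Sum.elim
        (fun k => fun t => Real.sin (Real.sqrt (lam k) * t) • α k)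
        (fun k => fun t => Real.cos (Real.sqrt (lam k) * t) • α k)) k t‖ ^ 2)
      = 2 * (∫ t in Set.Icc 0 T, ‖S t‖ ^ 2) + 2 * (∫ t in Set.Icc 0 T, ‖Cf t‖ ^ 2) := by
    rw [← hkey]
    exact setIntegral_congr_fun measurableSet_Icc (fun t _ => by rw [hsum t])
  rw [hIeq, hnormsplit]
  constructor
  · have hm1 : min c₁ c₂ * (∑ k ∈ s.toLeft, ‖a (Sum.inl k)‖ ^ 2)
        ≤ c₁ * ∑ k ∈ s.toLeft, ‖a (Sum.inl k)‖ ^ 2 :=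
      mul_le_mul_of_nonneg_right (min_le_left _ _) hLnn
    have hm2 : min c₁ c₂ * (∑ k ∈ s.toRight, ‖a (Sum.inr k)‖ ^ 2)
        ≤ c₂ * ∑ k ∈ s.toRight, ‖a (Sum.inr k)‖ ^ 2 :=
      mul_le_mul_of_nonneg_right (min_le_right _ _) hRnn
    have := hL.1; have := hR.1
    nlinarith
  · have hm1 : C₁ * (∑ k ∈ s.toLeft, ‖a (Sum.inl k)‖ ^ 2)
        ≤ max C₁ C₂ * ∑ k ∈ s.toLeft, ‖a (Sum.inl k)‖ ^ 2 :=
      mul_le_mul_of_nonneg_right (le_max_left _ _) hLnn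
    have hm2 : C₂ * (∑ k ∈ s.toRight, ‖a (Sum.inr k)‖ ^ 2)
        ≤ max C₁ C₂ * ∑ k ∈ s.toRight, ‖a (Sum.inr k)‖ ^ 2 :=
      mul_le_mul_of_nonneg_right (le_max_right _ _) hRnn
    have := hL.2; have := hR.2
    nlinarith
end

section
/- Let H be a Hilbert space and let (ξ_k)_{k∈ℕ} be a family in H which is a Bessel family, i.e., there exists B > 0 such that Σ_k |⟨f, ξ_k⟩|² ≤ B·‖f‖² for every f ∈ H. Suppose that the moment problem for (ξ_k) is solvable for all ℓ² data, i.e., for every square-summable sequence (c_k)_{k∈ℕ} there exists f ∈ H with ⟨f, ξ_k⟩ = c_k for all k. Then (ξ_k)_{k∈ℕ} is a Riesz sequence in H. -/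
open scoped InnerProductSpace ENNReal

/-- A family `ξ` in an inner product space over `𝕜` is a Riesz sequence:
there are constants `0 < c ≤ C` such that
`c·Σ ‖a k‖² ≤ ‖Σ a k • ξ k‖² ≤ C·Σ ‖a k‖²` for every finitely supported family of scalars. -/
def IsRieszSeq (𝕜 : Type*) [RCLike 𝕜] {H ι : Type*} [NormedAddCommGroup H]
    [InnerProductSpace 𝕜 H] (ξ : ι → H) : Prop :=
  ∃ c C : ℝ, 0 < c ∧ c ≤ C ∧ ∀ (s : Finset ι) (a : ι → 𝕜),
    c * ∑ k ∈ s, ‖a k‖ ^ 2 ≤ ‖∑ k ∈ s, a k • ξ k‖ ^ 2 ∧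
    ‖∑ k ∈ s, a k • ξ k‖ ^ 2 ≤ C * ∑ k ∈ s, ‖a k‖ ^ 2

section Aux

variable {𝕜 : Type*} [RCLike 𝕜]

lemma memL2_aux (x : ℕ → 𝕜) (h : Summable fun k => ‖x k‖ ^ 2) :
    Memℓp x 2 := by
  apply memℓp_gen
  have h2 : (2 : ℝ≥0∞).toReal = ((2 : ℕ) : ℝ) := by norm_num
  rw [h2]
  simpa [Real.rpow_natCast] using h

lemma lp_normsq_aux (y : lp (fun _ : ℕ => 𝕜) 2) : ‖y‖ ^ 2 = ∑' k, ‖y k‖ ^ 2 := by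
  have h2 : (0 : ℝ) < (2 : ℝ≥0∞).toReal := by norm_num
  have := lp.norm_rpow_eq_tsum h2 y
  have h3 : (2 : ℝ≥0∞).toReal = ((2 : ℕ) : ℝ) := by norm_num
  rw [h3] at this
  simpa [Real.rpow_natCast] using this

lemma lp_summable_aux (y : lp (fun _ : ℕ => 𝕜) 2) :
    Summable fun k => ‖y k‖ ^ 2 := by
  have h2 : (0 : ℝ) < (2 : ℝ≥0∞).toReal := by norm_num
  have := (lp.memℓp y).summable h2
  have h3 : (2 : ℝ≥0∞).toReal = ((2 : ℕ) : ℝ) := by norm_num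
  rw [h3] at this
  simpa [Real.rpow_natCast] using this

variable {H : Type*} [NormedAddCommGroup H] [InnerProductSpace 𝕜 H]

/-- The analysis operator `f ↦ (⟪ξ k, f⟫)_k` of a Bessel family, as a
continuous linear map into `ℓ²`. -/
noncomputable def besselAnalysis (ξ : ℕ → H) (B : ℝ) (hB : 0 ≤ B)
    (h : ∀ f : H, (Summable fun k => ‖⟪f, ξ k⟫_𝕜‖ ^ 2) ∧
      ∑' k, ‖⟪f, ξ k⟫_𝕜‖ ^ 2 ≤ B * ‖f‖ ^ 2) :
    H →L[𝕜] lp (fun _ : ℕ => 𝕜) 2 :=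
  LinearMap.mkContinuous
    { toFun := fun f => ⟨fun k => ⟪ξ k, f⟫_𝕜,
        memL2_aux _ (by simpa only [norm_inner_symm] using (h f).1)⟩
      map_add' := fun f g => lp.ext (funext fun k => inner_add_right _ _ _)
      map_smul' := fun c f => lp.ext (funext fun k => inner_smul_right _ _ _) }
    (Real.sqrt B)
    (by
      intro f
      have key : ‖(⟨fun k => ⟪ξ k, f⟫_𝕜,
          memL2_aux _ (by simpa only [norm_inner_symm] using (h f).1)⟩ :
          lp (fun _ : ℕ => 𝕜) 2)‖ ^ 2 ≤ B * ‖f‖ ^ 2 := by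
        rw [lp_normsq_aux]
        calc ∑' k, ‖⟪ξ k, f⟫_𝕜‖ ^ 2 = ∑' k, ‖⟪f, ξ k⟫_𝕜‖ ^ 2 := by
              simp only [norm_inner_symm]
          _ ≤ B * ‖f‖ ^ 2 := (h f).2
      have h1 := Real.sqrt_le_sqrt key
      rw [Real.sqrt_sq (norm_nonneg _), Real.sqrt_mul hB, Real.sqrt_sq (norm_nonneg _)] at h1
      exact h1)

end Aux

/-- If `(ξ k)` is a Bessel family in a Hilbert space `H` and the moment problem
`⟪f, ξ k⟫ = c_k` is solvable for all `ℓ²` data `(c_k)`, then `(ξ k)` is a Riesz sequence. -/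
theorem isRieszSeq_of_bessel_of_moment_solvable
    {𝕜 H : Type*} [RCLike 𝕜] [NormedAddCommGroup H] [InnerProductSpace 𝕜 H]
    [CompleteSpace H] (ξ : ℕ → H)
    (hbessel : ∃ B : ℝ, 0 < B ∧ ∀ f : H,
      (Summable fun k => ‖⟪f, ξ k⟫_𝕜‖ ^ 2) ∧ ∑' k, ‖⟪f, ξ k⟫_𝕜‖ ^ 2 ≤ B * ‖f‖ ^ 2)
    (hmoment : ∀ cs : ℕ → 𝕜, (Summable fun k => ‖cs k‖ ^ 2) →
      ∃ f : H, ∀ k, ⟪f, ξ k⟫_𝕜 = cs k) :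
    IsRieszSeq 𝕜 ξ := by
  obtain ⟨B, hB, hbes⟩ := hbessel
  set T : H →L[𝕜] lp (fun _ : ℕ => 𝕜) 2 := besselAnalysis ξ B hB.le hbes with hT
  have hTapply : ∀ (f : H) (k : ℕ), (T f : ℕ → 𝕜) k = ⟪ξ k, f⟫_𝕜 := fun f k => rfl
  -- T is surjective
  have hsurj : Function.Surjective T := by
    intro y
    obtain ⟨f, hf⟩ := hmoment (fun k => (starRingEnd 𝕜) (y k))
      (by simpa using lp_summable_aux y)
    refine ⟨f, lp.ext (funext fun k => ?_)⟩
    rw [hTapply, ← inner_conj_symm, hf]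
    simp
  obtain ⟨M, hM, hMle⟩ := T.exists_preimage_norm_le hsurj
  refine ⟨min B (1 / (M * M)), B, lt_min hB (by positivity), min_le_left _ _, ?_⟩
  intro s a
  set g : H := ∑ k ∈ s, a k • ξ k with hg
  set A : ℝ := ∑ k ∈ s, ‖a k‖ ^ 2 with hA
  have hA0 : 0 ≤ A := Finset.sum_nonneg fun k _ => by positivity
  constructor
  · -- lower bound, via the moment problem / open mapping theorem
    set y : lp (fun _ : ℕ => 𝕜) 2 :=
      ⟨fun k => if k ∈ s then a k else 0,
        memL2_aux _ (summable_of_ne_finset_zero (s := s) fun b hb => by simp [hb])⟩ with hy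
    have hynorm : ‖y‖ ^ 2 = A := by
      rw [lp_normsq_aux]
      rw [tsum_eq_sum (s := s) (f := fun k => ‖(y : ℕ → 𝕜) k‖ ^ 2)
        (fun b hb => by simp [hy, hb])]
      exact Finset.sum_congr rfl fun k hk => by simp [hy, hk]
    obtain ⟨f, hfT, hfn⟩ := hMle y
    have hcoord : ∀ k ∈ s, ⟪ξ k, f⟫_𝕜 = a k := by
      intro k hk
      have := congrFun (congrArg (Subtype.val) hfT) k
      rw [hTapply] at this
      simpa [hy, hk] using this
    have hinner : ⟪f, g⟫_𝕜 = (A : 𝕜) := by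
      rw [hg, inner_sum]
      have : ∀ k ∈ s, ⟪f, a k • ξ k⟫_𝕜 = ((‖a k‖ ^ 2 : ℝ) : 𝕜) := by
        intro k hk
        rw [inner_smul_right, ← inner_conj_symm, hcoord k hk, RCLike.mul_conj]
        norm_num
      rw [Finset.sum_congr rfl this, hA]
      push_cast
      ring
    have hAle : A ≤ ‖f‖ * ‖g‖ := by
      have h1 : ‖⟪f, g⟫_𝕜‖ = A := by rw [hinner]; simpa using hA0
      calc A = ‖⟪f, g⟫_𝕜‖ := h1.symm
        _ ≤ ‖f‖ * ‖g‖ := norm_inner_le_norm _ _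
    have hfy : ‖f‖ ≤ M * ‖y‖ := hfn
    have hy0 : (0:ℝ) ≤ ‖y‖ := norm_nonneg _
    have hg0 : (0:ℝ) ≤ ‖g‖ := norm_nonneg _
    -- A = ‖y‖², and A ≤ M ‖y‖ ‖g‖, so ‖y‖ ≤ M ‖g‖
    have hyy : ‖y‖ * ‖y‖ ≤ (M * ‖g‖) * ‖y‖ := by
      calc ‖y‖ * ‖y‖ = A := by rw [← hynorm]; ring
        _ ≤ ‖f‖ * ‖g‖ := hAle
        _ ≤ (M * ‖y‖) * ‖g‖ := mul_le_mul_of_nonneg_right hfy hg0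
        _ = (M * ‖g‖) * ‖y‖ := by ring
    have hyMg : ‖y‖ ≤ M * ‖g‖ := by
      rcases eq_or_lt_of_le hy0 with h0 | h0
      · rw [← h0]; positivity
      · exact le_of_mul_le_mul_right hyy h0
    have hsq : ‖y‖ ^ 2 ≤ (M * ‖g‖) ^ 2 := by
      apply pow_le_pow_left₀ hy0 hyMg
    rw [hynorm] at hsq
    have hmin : min B (1 / (M * M)) ≤ 1 / (M * M) := min_le_right _ _
    have : min B (1 / (M * M)) * A ≤ (1 / (M * M)) * A :=
      mul_le_mul_of_nonneg_right hmin hA0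
    calc min B (1 / (M * M)) * A ≤ (1 / (M * M)) * A := this
      _ ≤ (1 / (M * M)) * ((M * ‖g‖) ^ 2) := by
          apply mul_le_mul_of_nonneg_left hsq (by positivity)
      _ = ‖g‖ ^ 2 := by field_simp
  · -- upper bound, from the Bessel property
    have hsum := (hbes g).1
    have hts := (hbes g).2
    have hfin : ∑ k ∈ s, ‖⟪g, ξ k⟫_𝕜‖ ^ 2 ≤ B * ‖g‖ ^ 2 := by
      refine le_trans (Summable.sum_le_tsum s (fun k _ => by positivity) hsum) hts
    have hgg : ‖g‖ ^ 2 ≤ ∑ k ∈ s, ‖a k‖ * ‖⟪g, ξ k⟫_𝕜‖ := by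
      have h1 : ((‖g‖ : 𝕜)) ^ 2 = ⟪g, g⟫_𝕜 := (inner_self_eq_norm_sq_to_K g).symm
      have h2 : ⟪g, g⟫_𝕜 = ∑ k ∈ s, a k * ⟪g, ξ k⟫_𝕜 := by
        conv_lhs => rw [hg, inner_sum]
        exact Finset.sum_congr rfl fun k _ => inner_smul_right _ _ _
      calc ‖g‖ ^ 2 = ‖⟪g, g⟫_𝕜‖ := by
            rw [← h1, norm_pow]
            simp [RCLike.norm_ofReal, abs_of_nonneg (norm_nonneg g)]
        _ ≤ ∑ k ∈ s, ‖a k * ⟪g, ξ k⟫_𝕜‖ := by rw [h2]; exact norm_sum_le _ _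
        _ = ∑ k ∈ s, ‖a k‖ * ‖⟪g, ξ k⟫_𝕜‖ := by simp [norm_mul]
    have hCS : (∑ k ∈ s, ‖a k‖ * ‖⟪g, ξ k⟫_𝕜‖) ^ 2 ≤
        A * ∑ k ∈ s, ‖⟪g, ξ k⟫_𝕜‖ ^ 2 := by
      simpa [hA] using Finset.sum_mul_sq_le_sq_mul_sq s (fun k => ‖a k‖)
        (fun k => ‖⟪g, ξ k⟫_𝕜‖)
    have hsumnn : (0:ℝ) ≤ ∑ k ∈ s, ‖a k‖ * ‖⟪g, ξ k⟫_𝕜‖ :=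
      Finset.sum_nonneg fun k _ => by positivity
    -- ‖g‖⁴ ≤ A * B * ‖g‖², conclude
    have hg0 : (0:ℝ) ≤ ‖g‖ := norm_nonneg g
    have h4 : (‖g‖ ^ 2) * (‖g‖ ^ 2) ≤ (B * A) * (‖g‖ ^ 2) := by
      calc (‖g‖ ^ 2) * (‖g‖ ^ 2) ≤ (∑ k ∈ s, ‖a k‖ * ‖⟪g, ξ k⟫_𝕜‖) ^ 2 := by
            rw [← pow_two]
            exact pow_le_pow_left₀ (by positivity) hgg 2
        _ ≤ A * ∑ k ∈ s, ‖⟪g, ξ k⟫_𝕜‖ ^ 2 := hCS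
        _ ≤ A * (B * ‖g‖ ^ 2) := mul_le_mul_of_nonneg_left hfin hA0
        _ = (B * A) * (‖g‖ ^ 2) := by ring
    rcases eq_or_lt_of_le (sq_nonneg ‖g‖) with h0 | h0
    · rw [← h0]; positivity
    · exact le_of_mul_le_mul_right h4 h0
end
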